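/- Let G = ⟨s₁,…,s_r⟩ be the free group of rank r and G ↷ᵀ (X,B,μ) a G-system. If α and β are partitions of X with H(α) + H(β) < ∞, then |F(T,α) − F(T,β)| ≤ (4r−1)·d(α,β), where d is the Rohlin distance. -/

import Mathlib

open MeasureTheory Filter
open scoped ENNReal symmDiff

namespace Bowen

noncomputable section

/-- The free group of rank `r`. -/
abbrev FG (r : ℕ) := FreeGroup (Fin r)

/-- The generating set element corresponding to `(i, b)`: `sᵢ` if `b = true`,
`sᵢ⁻¹` if `b = false`. -/
def gen {r : ℕ} (s : Fin r × Bool) : FG r :=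
  cond s.2 (FreeGroup.of s.1) (FreeGroup.of s.1)⁻¹

/-- The symmetric generating set `S = {s₁^{±1},…,s_r^{±1}}`. -/
def Sset (r : ℕ) : Set (FG r) := Set.range (gen (r := r))

/-- The ball of radius `n` about the identity in the word metric of `(G,S)`. -/
def ball (r n : ℕ) : Set (FG r) := {g | FreeGroup.norm g ≤ n}

section Partitions

variable {X : Type*} [mX : MeasurableSpace X] {K L : Type*}

/-- Shannon entropy of the countable labeled partition `p` with respect to `μ`
(in `ℝ≥0∞`, so that `H(p) < ∞` is meaningful). -/
def Hpart (μ : Measure X) (p : X → K) : ℝ≥0∞ :=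
  ∑' k : K, ENNReal.ofReal (Real.negMulLog ((μ (p ⁻¹' {k})).toReal))

/-- The atom of the partition `p` containing `x`. -/
def atomOf (p : X → K) (x : X) : Set X := p ⁻¹' {p x}

/-- Conditional Shannon entropy of `p` given the sub-σ-algebra `m`:
`H(p|m) = ∫ -log( μ(A_x | m)(x) ) dμ(x)`. -/
def HpartC (μ : Measure X) (p : X → K) (m : MeasurableSpace X) : ℝ≥0∞ :=
  ∫⁻ x, ENNReal.ofReal
    (- Real.log ((μ[(atomOf p x).indicator (fun _ => (1:ℝ)) | m]) x)) ∂μ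

/-- Join of two labeled partitions. -/
def pjoin (p : X → K) (q : X → L) : X → K × L := fun x => (p x, q x)

/-- Pullback partition `T_g^{-1} p`. -/
def pull {r : ℕ} (T : FG r → X → X) (g : FG r) (p : X → K) : X → K :=
  fun x => p (T g x)

/-- The join `⋁_{q ∈ Q} T_q^{-1} p` over a set `Q ⊆ G`. -/
def powS {r : ℕ} (T : FG r → X → X) (p : X → K) (Q : Set (FG r)) : X → (Q → K) :=
  fun x q => p (T (q : FG r) x)

/-- The join `p^n = ⋁_{g ∈ B(e,n)} T_g^{-1} p`. -/
def pow {r : ℕ} (T : FG r → X → X) (p : X → K) (n : ℕ) : X → (ball r n → K) :=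
  powS T p (ball r n)

/-- The σ-algebra generated by the partition `p`. -/
def sAlg (p : X → K) : MeasurableSpace X := MeasurableSpace.comap p ⊤

/-- The smallest `G`-invariant σ-algebra containing the partition `p`. -/
def sAlgG {r : ℕ} (T : FG r → X → X) (p : X → K) : MeasurableSpace X :=
  ⨆ g : FG r, sAlg (pull T g p)

/-- The σ-algebra `⋁_{f ∈ Q} T_f^{-1} p` for a (possibly infinite) `Q ⊆ G`. -/
def sAlgSet {r : ℕ} (T : FG r → X → X) (p : X → K) (Q : Set (FG r)) :
    MeasurableSpace X :=
  ⨆ f ∈ Q, sAlg (pull T f p)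

/-- `F(T,α) = (1−2r)H(α) + ∑ᵢ H(α ∨ T_{sᵢ}^{-1}α)`. -/
def FF {r : ℕ} (T : FG r → X → X) (μ : Measure X) (p : X → K) : ℝ :=
  (1 - 2 * (r : ℝ)) * (Hpart μ p).toReal
    + ∑ i : Fin r, (Hpart μ (pjoin p (pull T (FreeGroup.of i) p))).toReal

/-- `f(T,α) = inf_{n>0} F(T,α^n)`, as an extended real. -/
def littleF {r : ℕ} (T : FG r → X → X) (μ : Measure X) (p : X → K) : EReal :=
  ⨅ n : ℕ, ((FF T μ (pow T p (n + 1)) : ℝ) : EReal)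

/-- Conditional version `F(T,α|𝓕) = (1−2r)H(α|𝓕) + ∑ᵢ H(α ∨ T_{sᵢ}^{-1}α|𝓕)`. -/
def FFc {r : ℕ} (T : FG r → X → X) (μ : Measure X) (m : MeasurableSpace X)
    (p : X → K) : ℝ :=
  (1 - 2 * (r : ℝ)) * (HpartC (mX := mX) μ p m).toReal
    + ∑ i : Fin r, (HpartC (mX := mX) μ (pjoin p (pull T (FreeGroup.of i) p)) m).toReal

/-- Conditional `f(T,α|𝓕) = inf_{n>0} F(T,α^n|𝓕)`. -/
def littleFc {r : ℕ} (T : FG r → X → X) (μ : Measure X) (m : MeasurableSpace X)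
    (p : X → K) : EReal :=
  ⨅ n : ℕ, ((FFc (mX := mX) T μ m (pow T p (n + 1)) : ℝ) : EReal)

/-- The mean entropy `h(T_s, α) = lim_n H(⋁_{i=0}^n T_s^{-i}α)/(n+1)`; since the
sequence is subadditive the limit equals the infimum, which we take as the
definition. -/
def hrate {r : ℕ} (T : FG r → X → X) (μ : Measure X) (s : FG r) (p : X → K) : ℝ :=
  ⨅ n : ℕ, (Hpart μ (fun x (i : Fin (n + 1)) => p (T (s ^ (i : ℕ)) x))).toReal / (n + 1)

/-- Conditional mean entropy `h(T_s, α|𝓕) = lim_n H(⋁_{i=0}^n T_s^{-i}α | 𝓕)/(n+1)`;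
for an invariant `𝓕` the sequence is subadditive so the limit equals the infimum. -/
def hrateC {r : ℕ} (T : FG r → X → X) (μ : Measure X) (m : MeasurableSpace X)
    (s : FG r) (p : X → K) : ℝ :=
  ⨅ n : ℕ, (HpartC (mX := mX) μ (fun x (i : Fin (n + 1)) => p (T (s ^ (i : ℕ)) x)) m).toReal / (n + 1)

/-- `F_*(T,α) = (1−r)H(α) + ∑ᵢ h(T_{sᵢ},α)`. -/
def Fstar {r : ℕ} (T : FG r → X → X) (μ : Measure X) (p : X → K) : ℝ :=
  (1 - (r : ℝ)) * (Hpart μ p).toReal + ∑ i : Fin r, hrate T μ (FreeGroup.of i) p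

/-- `f_*(T,α) = inf_{n>0} F_*(T,α^n)`. -/
def fstar {r : ℕ} (T : FG r → X → X) (μ : Measure X) (p : X → K) : EReal :=
  ⨅ n : ℕ, ((Fstar T μ (pow T p (n + 1)) : ℝ) : EReal)

/-- `F_*(T,α|𝓕) = (1−r)H(α|𝓕) + ∑ᵢ h(T_{sᵢ},α|𝓕)`. -/
def FstarC {r : ℕ} (T : FG r → X → X) (μ : Measure X) (m : MeasurableSpace X)
    (p : X → K) : ℝ :=
  (1 - (r : ℝ)) * (HpartC (mX := mX) μ p m).toReal + ∑ i : Fin r, hrateC (mX := mX) T μ m (FreeGroup.of i) p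

/-- `f_*(T,α|𝓕) = inf_{n>0} F_*(T,α^n|𝓕)`. -/
def fstarC {r : ℕ} (T : FG r → X → X) (μ : Measure X) (m : MeasurableSpace X)
    (p : X → K) : EReal :=
  ⨅ n : ℕ, ((FstarC (mX := mX) T μ m (pow T p (n + 1)) : ℝ) : EReal)

/-- `p` refines `q`: each atom of `p` is contained, up to a `μ`-null set,
in an atom of `q`. -/
def Refines (μ : Measure X) (p : X → K) (q : X → L) : Prop :=
  ∀ k : K, ∃ l : L, μ (p ⁻¹' {k} \ q ⁻¹' {l}) = 0

/-- Two labeled partitions are equal as partitions (up to null sets). -/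
def PartEquiv (μ : Measure X) (p : X → K) (q : X → L) : Prop :=
  Refines μ p q ∧ Refines μ q p

/-- `σ` is a simple splitting of `p`: `σ = p ∨ T_s^{-1}β` for some `s ∈ S` and
some coarsening `β` of `p`. -/
def SimpleSplit {r : ℕ} (μ : Measure X) (T : FG r → X → X) (p σ : X → ℕ) : Prop :=
  ∃ s ∈ Sset r, ∃ β : X → ℕ, Measurable β ∧ Refines μ p β ∧
    PartEquiv μ σ (pjoin p (pull T s β))

/-- `τ` is a splitting of `p`: obtained from `p` by a finite sequence of simple
splittings (as a partition, i.e. up to relabeling and null sets). -/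
def IsSplitting {r : ℕ} (μ : Measure X) (T : FG r → X → X) (p : X → ℕ)
    (τ : X → K) : Prop :=
  ∃ σ : X → ℕ, Relation.ReflTransGen (SimpleSplit μ T) p σ ∧ PartEquiv μ σ τ

/-- A partition is generating if the smallest `G`-invariant σ-algebra containing it
is the full σ-algebra up to `μ`-null sets. -/
def Generating {r : ℕ} (T : FG r → X → X) (μ : Measure X) (p : X → K) : Prop :=
  ∀ A : Set X, MeasurableSet A →
    ∃ A' : Set X, MeasurableSet[sAlgG T p] A' ∧ μ (A ∆ A') = 0

/-- The Rohlin distance `d(α,β) = H(α|β) + H(β|α)`. -/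
def rohlinDist (μ : Measure X) (p : X → K) (q : X → L) : ℝ :=
  (HpartC μ p (sAlg q)).toReal + (HpartC μ q (sAlg p)).toReal

end Partitions

/-- Adjacency in the left Cayley graph `Γ_L`: an edge joins `a` and `sa`, `s ∈ S`. -/
def adjL {r : ℕ} (a b : FG r) : Prop := ∃ s ∈ Sset r, b = s * a

/-- `Past(g₁;g₂)`: the set of `f ∈ G` such that every path in the left Cayley
graph from `f` to `g₁` passes through `g₂`. -/
def Past {r : ℕ} (g₁ g₂ : FG r) : Set (FG r) :=
  {f | ∀ l : List (FG r), l ≠ [] → l.head? = some f → l.getLast? = some g₁ →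
        l.Chain' adjL → g₂ ∈ l}

/-- A subset `F ⊆ G` is right-connected: the subgraph of the right Cayley graph
induced on `F` is connected. -/
def RightConnected {r : ℕ} (F : Set (FG r)) : Prop :=
  ∀ g ∈ F, ∀ h ∈ F,
    Relation.ReflTransGen (fun a b => a ∈ F ∧ b ∈ F ∧ ∃ s ∈ Sset r, b = a * s) g h

/-- A subset `F ⊆ G` is left-connected: the subgraph of the left Cayley graph
induced on `F` is connected. -/
def LeftConnected {r : ℕ} (F : Set (FG r)) : Prop :=
  ∀ g ∈ F, ∀ h ∈ F,
    Relation.ReflTransGen (fun a b => a ∈ F ∧ b ∈ F ∧ ∃ s ∈ Sset r, b = s * a) g h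

section Markov

variable {X : Type*} [MeasurableSpace X] {K : Type*}

/-- A `G`-process `(T,X,μ,α)` is Markov: for every `s ∈ S`, `g ∈ G` and every atom
`A` of `α`, `μ(T_{sg}^{-1}A | ⋁_{f∈Past(sg;g)} T_f^{-1}α) = μ(T_{sg}^{-1}A | T_g^{-1}α)`
almost everywhere. -/
def IsMarkov {r : ℕ} (μ : Measure X) (T : FG r → X → X) (p : X → K) : Prop :=
  ∀ s ∈ Sset r, ∀ g : FG r, ∀ k : K,
    (μ[((pull T (s * g) p) ⁻¹' {k}).indicator (fun _ => (1:ℝ)) |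
        sAlgSet T p (Past (s * g) g)])
      =ᵐ[μ]
    (μ[((pull T (s * g) p) ⁻¹' {k}).indicator (fun _ => (1:ℝ)) |
        sAlg (pull T g p)])

end Markov


section ExtraDefs

/-- The distance `d₁` between two ordered processes:
`∑_{s∈S} ∑_{i,j} |μ(A_i ∩ T_s^{-1}A_j) − ν(B_i ∩ U_s^{-1}B_j)|`. -/
def d1 {X Y : Type*} [MeasurableSpace X] [MeasurableSpace Y] {r : ℕ}
    (T : FG r → X → X) (μ : Measure X) (α : X → ℕ)
    (U : FG r → Y → Y) (ν : Measure Y) (β : Y → ℕ) : ℝ :=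
  ∑ i : Fin r, ∑ b : Bool,
    ∑' ij : ℕ × ℕ,
      |(μ (α ⁻¹' {ij.1} ∩ pull T (gen (i, b)) α ⁻¹' {ij.2})).toReal -
        (ν (β ⁻¹' {ij.1} ∩ pull U (gen (i, b)) β ⁻¹' {ij.2})).toReal|

/-- Isomorphism of ordered processes: a measure conjugacy between conull sets
intertwining the actions and carrying the `i`-th atom to the `i`-th atom. -/
def OrderedIso {X Y : Type*} [MeasurableSpace X] [MeasurableSpace Y] {r : ℕ}
    (T : FG r → X → X) (μ : Measure X) (α : X → ℕ)
    (U : FG r → Y → Y) (ν : Measure Y) (β : Y → ℕ) : Prop :=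
  ∃ (X' : Set X) (Y' : Set Y) (φ : X → Y) (ψ : Y → X),
    MeasurableSet X' ∧ MeasurableSet Y' ∧ μ X'ᶜ = 0 ∧ ν Y'ᶜ = 0 ∧
    Measurable φ ∧ Measurable ψ ∧ Set.MapsTo φ X' Y' ∧ Set.MapsTo ψ Y' X' ∧
    (∀ x ∈ X', ψ (φ x) = x) ∧ (∀ y ∈ Y', φ (ψ y) = y) ∧
    Measure.map φ μ = ν ∧
    (∀ (g : FG r), ∀ x ∈ X', φ (T g x) = U g (φ x)) ∧
    (∀ x ∈ X', β (φ x) = α x)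

/-- A transition system for `(G,S)`: a family of `K × K` matrices indexed by the
generating set together with a row vector, written as functions. -/
structure TransSys (r : ℕ) (K : Type*) where
  P : Fin r × Bool → K → K → ℝ
  pi : K → ℝ

/-- The transition system is an invariant transition system: the `P^s` are
stochastic matrices, `π` is a probability vector which is a steady state vector
for every `P^s`, and `π_i P^{s^{-1}}_{ij} = π_j P^s_{ji}`. -/
def TransSys.IsInvariant {r : ℕ} {K : Type*} (ts : TransSys r K) : Prop :=
  (∀ s i j, 0 ≤ ts.P s i j) ∧ (∀ s i, HasSum (ts.P s i) 1) ∧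
    (∀ i, 0 ≤ ts.pi i) ∧ HasSum ts.pi 1 ∧
    (∀ s j, HasSum (fun i => ts.pi i * ts.P s i j) (ts.pi j)) ∧
    (∀ s i j, ts.pi i * ts.P (s.1, !s.2) i j = ts.pi j * ts.P s j i)

/-- The canonical (shift) action of `G` on `K^G`: `(T_g x)(f) = x(fg)`. -/
def shiftT {r : ℕ} {K : Type*} : FG r → (FG r → K) → (FG r → K) :=
  fun g x f => x (f * g)

/-- `μ` is (a measure) induced by the transition system `ts`: the time-`e`
distribution is `π` and the transition probabilities into the complement of the
past are given by the matrices `P^s`.  (Note `T_g^{-1}A_k = {x : x(g) = k}`;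
the conditional equalities `μ(A|B) = c` are recorded in the equivalent product
form `μ(A ∩ B) = c·μ(B)`.) -/
def IsInducedBy {r : ℕ} {K : Type*} [MeasurableSpace K]
    (μ : Measure (FG r → K)) (ts : TransSys r K) : Prop :=
  (∀ k : K, μ {x | x 1 = k} = ENNReal.ofReal (ts.pi k)) ∧
  ∀ (s : Fin r × Bool) (g : FG r),
    FreeGroup.norm (gen s * g) = FreeGroup.norm g + 1 →
    ∀ (n : ℕ) (fs : Fin n → FG r) (ks : Fin n → K) (k₀ k : K),
      (∀ i, fs i ∈ Past (gen s * g) g ∧ fs i ≠ g) →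
      (μ ({x | x (gen s * g) = k} ∩ ({x | x g = k₀} ∩ ⋂ i, {x | x (fs i) = ks i}))
          = ENNReal.ofReal (ts.P s k₀ k) * μ ({x | x g = k₀} ∩ ⋂ i, {x | x (fs i) = ks i})) ∧
      μ ({x | x (gen s * g) = k} ∩ {x | x g = k₀})
          = ENNReal.ofReal (ts.P s k₀ k) * μ {x | x g = k₀}

end ExtraDefs

section Aux

variable {X : Type*} [mX : MeasurableSpace X] {K L M : Type*}

/-- Auxiliary: `φ(c) = c · (−log c)` in `ℝ≥0∞`. -/
def phiE (c : ℝ≥0∞) : ℝ≥0∞ := c * ENNReal.ofReal (-Real.log c.toReal)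

lemma phiE_eq (c : ℝ≥0∞) :
    ENNReal.ofReal (Real.negMulLog c.toReal) = phiE c := by
  rcases eq_or_ne c ⊤ with rfl | hc
  · simp [phiE, Real.negMulLog]
  · rw [phiE, Real.negMulLog, neg_mul_comm, ENNReal.ofReal_mul ENNReal.toReal_nonneg,
      ENNReal.ofReal_toReal hc]

lemma Hpart_eq_phiE (μ : Measure X) (p : X → K) :
    Hpart μ p = ∑' k : K, phiE (μ (p ⁻¹' {k})) :=
  tsum_congr fun k => phiE_eq _

/-- Explicit conditional entropy of `p` given `q`, as a sum over pairs of atoms. -/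
def Hc (μ : Measure X) (p : X → K) (q : X → L) : ℝ≥0∞ :=
  ∑' kl : K × L, μ (p ⁻¹' {kl.1} ∩ q ⁻¹' {kl.2}) *
    ENNReal.ofReal (Real.log (μ (q ⁻¹' {kl.2})).toReal -
      Real.log (μ (p ⁻¹' {kl.1} ∩ q ⁻¹' {kl.2})).toReal)

lemma pjoin_preimage (p : X → K) (q : X → L) (k : K) (l : L) :
    pjoin p q ⁻¹' {(k, l)} = p ⁻¹' {k} ∩ q ⁻¹' {l} := by
  ext x; simp [pjoin, Prod.ext_iff]

variable [MeasurableSpace L] [MeasurableSingletonClass L] [Countable L]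

lemma meas_inter_tsum (μ : Measure X) {q : X → L} (hq : Measurable q)
    {D : Set X} (hD : MeasurableSet D) :
    ∑' l : L, μ (D ∩ q ⁻¹' {l}) = μ D := by
  rw [← measure_iUnion (fun l l' hll' => Set.disjoint_left.mpr
        (fun x hx hx' => hll' (((hx.2 : q x = l).symm.trans (hx'.2 : q x = l')))))
      (fun l => hD.inter (hq (measurableSet_singleton l)))]
  congr 1
  ext x
  simp

lemma meas_fiber_tsum (μ : Measure X) {q : X → L} (hq : Measurable q)
    {D : Set X} (hD : MeasurableSet D) (S : Set L) :
    ∑' l : S, μ (D ∩ q ⁻¹' {(l : L)}) = μ (D ∩ q ⁻¹' S) := by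
  have hdisj : Pairwise (Function.onFun Disjoint fun l : S => D ∩ q ⁻¹' {(l : L)}) :=
    fun l l' hll' => Set.disjoint_left.mpr
      (fun x hx hx' => hll' (Subtype.ext
        (((hx.2 : q x = (l : L)).symm.trans (hx'.2 : q x = (l' : L))))))
  rw [← measure_iUnion hdisj (fun l => hD.inter (hq (measurableSet_singleton _)))]
  congr 1
  ext x
  simp only [Set.mem_iUnion, Set.mem_inter_iff, Set.mem_preimage, Set.mem_singleton_iff]
  constructor
  · rintro ⟨l, hx, hl⟩; exact ⟨hx, hl ▸ l.2⟩
  · rintro ⟨hx, hS⟩; exact ⟨⟨q x, hS⟩, hx, rfl⟩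

lemma phiE_tsum_le {ι : Type*} (c : ι → ℝ≥0∞) :
    phiE (∑' i, c i) ≤ ∑' i, phiE (c i) := by
  rcases eq_or_ne (∑' i, c i) ⊤ with hC | hC
  · rw [phiE, hC]; simp
  · rw [phiE, ← ENNReal.tsum_mul_right]
    refine ENNReal.tsum_le_tsum fun i => ?_
    rcases eq_or_ne (c i) 0 with h0 | h0
    · simp [h0, phiE]
    · refine mul_le_mul_right (ENNReal.ofReal_le_ofReal (neg_le_neg ?_)) _
      exact Real.log_le_log (ENNReal.toReal_pos h0 (ne_top_of_le_ne_top hC (ENNReal.le_tsum i)))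
        (ENNReal.toReal_mono hC (ENNReal.le_tsum i))


lemma preimage_fiber_eq (q : X → L) (f : L → M) (m : M) :
    (f ∘ q) ⁻¹' {m} = q ⁻¹' (f ⁻¹' {m}) := rfl

/-- Entropy of a coarsening is at most the entropy of the partition. -/
lemma Hpart_comp_le (μ : Measure X) {t : X → L} (ht : Measurable t) (f : L → M) :
    Hpart μ (f ∘ t) ≤ Hpart μ t := by
  rw [Hpart_eq_phiE, Hpart_eq_phiE]
  have key : ∀ m : M, μ ((f ∘ t) ⁻¹' {m}) = ∑' l : (f ⁻¹' {m} : Set L), μ (t ⁻¹' {(l : L)}) := by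
    intro m
    rw [preimage_fiber_eq]
    have := meas_fiber_tsum (q := t) μ ht MeasurableSet.univ (f ⁻¹' {m})
    simp only [Set.univ_inter] at this
    exact this.symm
  calc ∑' m : M, phiE (μ ((f ∘ t) ⁻¹' {m}))
      ≤ ∑' m : M, ∑' l : (f ⁻¹' {m} : Set L), phiE (μ (t ⁻¹' {(l : L)})) := by
        refine ENNReal.tsum_le_tsum fun m => ?_
        rw [key m]; exact phiE_tsum_le _
    _ = ∑' l : L, phiE (μ (t ⁻¹' {l})) := by
        rw [← ENNReal.tsum_sigma]
        exact ((Equiv.sigmaFiberEquiv f).tsum_eq fun l => phiE (μ (t ⁻¹' {l})))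

/-- The countable log-sum inequality, in `ℝ≥0∞`. -/
lemma logsum {ι : Type*} (c b : ι → ℝ≥0∞) (hcb : ∀ i, c i ≤ b i) (hB : ∑' i, b i ≠ ⊤) :
    ∑' i, c i * ENNReal.ofReal (Real.log (b i).toReal - Real.log (c i).toReal)
      ≤ (∑' i, c i) * ENNReal.ofReal
          (Real.log (∑' i, b i).toReal - Real.log (∑' i, c i).toReal) := by
  set B := ∑' i, b i with hBdef
  set C := ∑' i, c i with hCdef
  have hCB : C ≤ B := ENNReal.tsum_le_tsum hcb
  have hC : C ≠ ⊤ := ne_top_of_le_ne_top hB hCB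
  rcases eq_or_ne C 0 with hC0 | hC0
  · have hc0 : ∀ i, c i = 0 := fun i => by
      have := ENNReal.le_tsum (f := c) i
      rw [← hCdef, hC0] at this
      exact le_antisymm this zero_le
    simp [hc0]
  have hB0 : B ≠ 0 := fun h => hC0 (le_antisymm (h ▸ hCB) zero_le)
  have hBR : 0 < B.toReal := ENNReal.toReal_pos hB0 hB
  have hCR : 0 < C.toReal := ENNReal.toReal_pos hC0 hC
  -- termwise inequality after adding `c i` to both sides
  have key : ∀ i, c i * ENNReal.ofReal (Real.log (b i).toReal - Real.log (c i).toReal) + c i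
      ≤ C / B * b i + c i * ENNReal.ofReal (Real.log B.toReal - Real.log C.toReal) := by
    intro i
    rcases eq_or_ne (c i) 0 with h0 | h0
    · simp [h0]
    have hbi : b i ≠ ⊤ := ne_top_of_le_ne_top hB (ENNReal.le_tsum i)
    have hci : c i ≠ ⊤ := ne_top_of_le_ne_top hbi (hcb i)
    have hcR : 0 < (c i).toReal := ENNReal.toReal_pos h0 hci
    have hbR : 0 < (b i).toReal :=
      lt_of_lt_of_le hcR (ENNReal.toReal_mono hbi (hcb i))
    -- the real inequality
    have hlog : Real.log ((b i).toReal * C.toReal / ((c i).toReal * B.toReal))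
        ≤ (b i).toReal * C.toReal / ((c i).toReal * B.toReal) - 1 :=
      Real.log_le_sub_one_of_pos (by positivity)
    have hlogeq : Real.log ((b i).toReal * C.toReal / ((c i).toReal * B.toReal))
        = Real.log (b i).toReal + Real.log C.toReal
          - (Real.log (c i).toReal + Real.log B.toReal) := by
      rw [Real.log_div (by positivity) (by positivity), Real.log_mul hbR.ne' hCR.ne',
        Real.log_mul hcR.ne' hBR.ne']
    have hdiv : (c i).toReal * ((b i).toReal * C.toReal / ((c i).toReal * B.toReal))
        = C.toReal / B.toReal * (b i).toReal := by
      field_simp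
    have hreal : (c i).toReal * (Real.log (b i).toReal - Real.log (c i).toReal) + (c i).toReal
        ≤ C.toReal / B.toReal * (b i).toReal
          + (c i).toReal * (Real.log B.toReal - Real.log C.toReal) := by
      have h2 : (c i).toReal * Real.log ((b i).toReal * C.toReal / ((c i).toReal * B.toReal))
          ≤ (c i).toReal * ((b i).toReal * C.toReal / ((c i).toReal * B.toReal)) -
            (c i).toReal := by nlinarith
      rw [hdiv] at h2
      rw [hlogeq] at h2
      nlinarith
    -- transfer to ℝ≥0∞
    have e1 : c i * ENNReal.ofReal (Real.log (b i).toReal - Real.log (c i).toReal) + c i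
        = ENNReal.ofReal ((c i).toReal * (Real.log (b i).toReal - Real.log (c i).toReal)
            + (c i).toReal) := by
      have hnn : 0 ≤ (c i).toReal * (Real.log (b i).toReal - Real.log (c i).toReal) :=
        mul_nonneg ENNReal.toReal_nonneg (sub_nonneg.mpr
          (Real.log_le_log hcR (ENNReal.toReal_mono hbi (hcb i))))
      rw [ENNReal.ofReal_add hnn ENNReal.toReal_nonneg,
        ENNReal.ofReal_mul ENNReal.toReal_nonneg, ENNReal.ofReal_toReal hci]
    have e2 : C / B * b i + c i * ENNReal.ofReal (Real.log B.toReal - Real.log C.toReal)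
        = ENNReal.ofReal (C.toReal / B.toReal * (b i).toReal
            + (c i).toReal * (Real.log B.toReal - Real.log C.toReal)) := by
      have hnn : 0 ≤ (c i).toReal * (Real.log B.toReal - Real.log C.toReal) :=
        mul_nonneg ENNReal.toReal_nonneg (sub_nonneg.mpr
          (Real.log_le_log hCR (ENNReal.toReal_mono hB hCB)))
      rw [ENNReal.ofReal_add (by positivity) hnn,
        ENNReal.ofReal_mul (by positivity), ENNReal.ofReal_mul ENNReal.toReal_nonneg,
        ENNReal.ofReal_toReal hci, ENNReal.ofReal_toReal hbi,
        ENNReal.ofReal_div_of_pos hBR, ENNReal.ofReal_toReal hC, ENNReal.ofReal_toReal hB]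
    rw [e1, e2]
    exact ENNReal.ofReal_le_ofReal hreal
  have hsum := ENNReal.tsum_le_tsum key
  rw [ENNReal.tsum_add, ENNReal.tsum_add] at hsum
  have hCB' : C / B * B = C := by
    rw [ENNReal.div_mul_cancel hB0 hB]
  rw [ENNReal.tsum_mul_left, ENNReal.tsum_mul_right, ← hBdef, hCB', ← hCdef] at hsum
  calc ∑' i, c i * ENNReal.ofReal (Real.log (b i).toReal - Real.log (c i).toReal)
      = (∑' i, c i * ENNReal.ofReal (Real.log (b i).toReal - Real.log (c i).toReal)
          + C) - C := by
        rw [ENNReal.add_sub_cancel_right hC]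
    _ ≤ (C + C * ENNReal.ofReal (Real.log B.toReal - Real.log C.toReal)) - C :=
        tsub_le_tsub_right hsum C
    _ = C * ENNReal.ofReal (Real.log B.toReal - Real.log C.toReal) := by
        rw [add_comm, ENNReal.add_sub_cancel_right hC]


lemma tsum_prod_e {A B : Type*} (g : A × B → ℝ≥0∞) :
    ∑' x : A × B, g x = ∑' a, ∑' b, g (a, b) := by
  have := ENNReal.tsum_prod (f := fun a b => g (a, b))
  simpa using this

lemma tsum_fiber_e {A B : Type*} (f : A → B) (g : A → ℝ≥0∞) :
    ∑' a, g a = ∑' b, ∑' a : (f ⁻¹' {b} : Set A), g (a : A) := by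
  rw [← ENNReal.tsum_sigma (fun b (a : (f ⁻¹' {b} : Set A)) => g (a : A))]
  exact ((Equiv.sigmaFiberEquiv f).tsum_eq g).symm

lemma tsum_atoms (μ : Measure X) {q : X → L} (hq : Measurable q) :
    ∑' l : L, μ (q ⁻¹' {l}) = μ Set.univ := by
  simpa using meas_inter_tsum μ hq MeasurableSet.univ

lemma term_split {d e f : ℝ≥0∞} (hde : d ≤ e) (hef : e ≤ f) (hf : f ≠ ⊤) :
    d * ENNReal.ofReal (Real.log f.toReal - Real.log d.toReal)
      = d * ENNReal.ofReal (Real.log f.toReal - Real.log e.toReal)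
        + d * ENNReal.ofReal (Real.log e.toReal - Real.log d.toReal) := by
  rcases eq_or_ne d 0 with rfl | hd0
  · simp
  have he : e ≠ ⊤ := ne_top_of_le_ne_top hf hef
  have hd : d ≠ ⊤ := ne_top_of_le_ne_top he hde
  have hdR : 0 < d.toReal := ENNReal.toReal_pos hd0 hd
  have heR : d.toReal ≤ e.toReal := ENNReal.toReal_mono he hde
  have hfR : e.toReal ≤ f.toReal := ENNReal.toReal_mono hf hef
  rw [← mul_add, ← ENNReal.ofReal_add
    (sub_nonneg.mpr (Real.log_le_log (lt_of_lt_of_le hdR heR) hfR))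
    (sub_nonneg.mpr (Real.log_le_log hdR heR)), sub_add_sub_cancel]

variable [MeasurableSpace K] [MeasurableSingletonClass K] [Countable K]

lemma meas_inter_tsum' (μ : Measure X) {p : X → K} (hp : Measurable p)
    {D : Set X} (hD : MeasurableSet D) :
    ∑' k : K, μ (p ⁻¹' {k} ∩ D) = μ D := by
  simpa [Set.inter_comm] using meas_inter_tsum μ hp hD

/-- The chain rule `H(p ∨ q) = H(q) + H(p|q)`. -/
lemma Hpart_pjoin (μ : Measure X) [IsProbabilityMeasure μ] {p : X → K} {q : X → L}
    (hp : Measurable p) (hq : Measurable q) :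
    Hpart μ (pjoin p q) = Hpart μ q + Hc μ p q := by
  rw [Hpart_eq_phiE, Hpart_eq_phiE, Hc]
  have h1 : ∀ kl : K × L, phiE (μ (pjoin p q ⁻¹' {kl}))
      = μ (p ⁻¹' {kl.1} ∩ q ⁻¹' {kl.2})
          * ENNReal.ofReal (-Real.log (μ (q ⁻¹' {kl.2})).toReal)
        + μ (p ⁻¹' {kl.1} ∩ q ⁻¹' {kl.2})
          * ENNReal.ofReal (Real.log (μ (q ⁻¹' {kl.2})).toReal
              - Real.log (μ (p ⁻¹' {kl.1} ∩ q ⁻¹' {kl.2})).toReal) := by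
    rintro ⟨k, l⟩
    rw [pjoin_preimage]
    have h := term_split (d := μ (p ⁻¹' {k} ∩ q ⁻¹' {l})) (e := μ (q ⁻¹' {l})) (f := 1)
      (measure_mono Set.inter_subset_right) prob_le_one ENNReal.one_ne_top
    simp only [ENNReal.toReal_one, Real.log_one, zero_sub] at h
    calc phiE (μ (p ⁻¹' {k} ∩ q ⁻¹' {l}))
        = μ (p ⁻¹' {k} ∩ q ⁻¹' {l})
            * ENNReal.ofReal (-Real.log (μ (p ⁻¹' {k} ∩ q ⁻¹' {l})).toReal) := rfl
      _ = _ := h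
  calc ∑' kl : K × L, phiE (μ (pjoin p q ⁻¹' {kl}))
      = ∑' kl : K × L, (μ (p ⁻¹' {kl.1} ∩ q ⁻¹' {kl.2})
            * ENNReal.ofReal (-Real.log (μ (q ⁻¹' {kl.2})).toReal)
          + μ (p ⁻¹' {kl.1} ∩ q ⁻¹' {kl.2})
            * ENNReal.ofReal (Real.log (μ (q ⁻¹' {kl.2})).toReal
                - Real.log (μ (p ⁻¹' {kl.1} ∩ q ⁻¹' {kl.2})).toReal)) :=
        tsum_congr h1
    _ = (∑' kl : K × L, μ (p ⁻¹' {kl.1} ∩ q ⁻¹' {kl.2})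
            * ENNReal.ofReal (-Real.log (μ (q ⁻¹' {kl.2})).toReal))
        + ∑' kl : K × L, μ (p ⁻¹' {kl.1} ∩ q ⁻¹' {kl.2})
            * ENNReal.ofReal (Real.log (μ (q ⁻¹' {kl.2})).toReal
                - Real.log (μ (p ⁻¹' {kl.1} ∩ q ⁻¹' {kl.2})).toReal) := ENNReal.tsum_add
    _ = (∑' l : L, phiE (μ (q ⁻¹' {l}))) + _ := by
        congr 1
        rw [tsum_prod_e, ENNReal.tsum_comm]
        refine tsum_congr fun l => ?_
        show ∑' (a : K), μ (p ⁻¹' {a} ∩ q ⁻¹' {l})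
            * ENNReal.ofReal (-Real.log (μ (q ⁻¹' {l})).toReal) = _
        rw [ENNReal.tsum_mul_right, meas_inter_tsum' μ hp (hq (measurableSet_singleton l))]
        rfl

/-- `H(p|q) ≤ H(p)`. -/
lemma Hc_le_Hpart (μ : Measure X) [IsProbabilityMeasure μ] {p : X → K} {q : X → L}
    (hp : Measurable p) (hq : Measurable q) : Hc μ p q ≤ Hpart μ p := by
  rw [Hc, Hpart_eq_phiE, tsum_prod_e]
  refine ENNReal.tsum_le_tsum fun k => ?_
  have hsum_b : ∑' l : L, μ (q ⁻¹' {l}) = 1 := by rw [tsum_atoms μ hq, measure_univ]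
  have hsum_c : ∑' l : L, μ (p ⁻¹' {k} ∩ q ⁻¹' {l}) = μ (p ⁻¹' {k}) :=
    meas_inter_tsum μ hq (hp (measurableSet_singleton k))
  have h := logsum (fun l => μ (p ⁻¹' {k} ∩ q ⁻¹' {l})) (fun l => μ (q ⁻¹' {l}))
    (fun l => measure_mono Set.inter_subset_right) (by rw [hsum_b]; exact ENNReal.one_ne_top)
  rw [hsum_b, hsum_c] at h
  refine h.trans_eq ?_
  simp [phiE, zero_sub]

/-- Conditioning on a coarser partition increases conditional entropy. -/
lemma Hc_comp_le (μ : Measure X) [IsFiniteMeasure μ] {p : X → K} {q : X → L}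
    (hp : Measurable p) (hq : Measurable q) (f : L → M) :
    Hc μ p q ≤ Hc μ p (f ∘ q) := by
  rw [Hc, Hc, tsum_prod_e, tsum_prod_e]
  refine ENNReal.tsum_le_tsum fun k => ?_
  rw [tsum_fiber_e f]
  refine ENNReal.tsum_le_tsum fun m => ?_
  have hsum_c : ∑' l : (f ⁻¹' {m} : Set L), μ (p ⁻¹' {k} ∩ q ⁻¹' {(l : L)})
      = μ (p ⁻¹' {k} ∩ (f ∘ q) ⁻¹' {m}) := by
    rw [preimage_fiber_eq]
    exact meas_fiber_tsum μ hq (hp (measurableSet_singleton k)) _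
  have hsum_b : ∑' l : (f ⁻¹' {m} : Set L), μ (q ⁻¹' {(l : L)}) = μ ((f ∘ q) ⁻¹' {m}) := by
    rw [preimage_fiber_eq]
    simpa using meas_fiber_tsum μ hq MeasurableSet.univ (f ⁻¹' {m})
  have h := logsum (fun l : (f ⁻¹' {m} : Set L) => μ (p ⁻¹' {k} ∩ q ⁻¹' {(l : L)}))
    (fun l : (f ⁻¹' {m} : Set L) => μ (q ⁻¹' {(l : L)}))
    (fun l => measure_mono Set.inter_subset_right) (by rw [hsum_b]; exact measure_ne_top μ _)
  rw [hsum_b, hsum_c] at h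
  exact h

/-- Invariance of conditional entropy under a measure-preserving map. -/
lemma Hc_comp_mp (μ : Measure X) {τ : X → X} (hτ : MeasurePreserving τ μ μ)
    {p : X → K} {q : X → L} (hp : Measurable p) (hq : Measurable q) :
    Hc μ (p ∘ τ) (q ∘ τ) = Hc μ p q := by
  refine tsum_congr fun kl => ?_
  have h1 : (p ∘ τ) ⁻¹' {kl.1} ∩ (q ∘ τ) ⁻¹' {kl.2}
      = τ ⁻¹' (p ⁻¹' {kl.1} ∩ q ⁻¹' {kl.2}) := rfl
  have h2 : (q ∘ τ) ⁻¹' {kl.2} = τ ⁻¹' (q ⁻¹' {kl.2}) := rfl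
  rw [h1, h2,
    hτ.measure_preimage (((hp (measurableSet_singleton kl.1)).inter
      (hq (measurableSet_singleton kl.2))).nullMeasurableSet),
    hτ.measure_preimage ((hq (measurableSet_singleton kl.2)).nullMeasurableSet)]

lemma Hpart_comp_mp (μ : Measure X) {τ : X → X} (hτ : MeasurePreserving τ μ μ)
    {p : X → K} (hp : Measurable p) :
    Hpart μ (p ∘ τ) = Hpart μ p := by
  refine tsum_congr fun k => ?_
  have h1 : (p ∘ τ) ⁻¹' {k} = τ ⁻¹' (p ⁻¹' {k}) := rfl
  rw [h1, hτ.measure_preimage ((hp (measurableSet_singleton k)).nullMeasurableSet)]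


/-- Conditional chain rule: `H(p ∨ q | t) = H(q|t) + H(p | q ∨ t)`. -/
lemma Hc_pjoin_eq [MeasurableSpace M] [MeasurableSingletonClass M] [Countable M]
    (μ : Measure X) [IsProbabilityMeasure μ] {p : X → K} {q : X → L} {t : X → M}
    (hp : Measurable p) (hq : Measurable q) (ht : Measurable t) :
    Hc μ (pjoin p q) t = Hc μ q t + Hc μ p (pjoin q t) := by
  have claim1 : Hc μ (pjoin p q) t
      = ∑' k : K, ∑' l : L, ∑' m : M,
          μ (p ⁻¹' {k} ∩ (q ⁻¹' {l} ∩ t ⁻¹' {m})) *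
            ENNReal.ofReal (Real.log (μ (t ⁻¹' {m})).toReal -
              Real.log (μ (p ⁻¹' {k} ∩ (q ⁻¹' {l} ∩ t ⁻¹' {m}))).toReal) := by
    rw [Hc, tsum_prod_e, tsum_prod_e]
    refine tsum_congr fun k => tsum_congr fun l => tsum_congr fun m => ?_
    show μ (pjoin p q ⁻¹' {(k, l)} ∩ t ⁻¹' {m}) *
        ENNReal.ofReal (Real.log (μ (t ⁻¹' {m})).toReal -
          Real.log (μ (pjoin p q ⁻¹' {(k, l)} ∩ t ⁻¹' {m})).toReal) = _
    rw [pjoin_preimage, Set.inter_assoc]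
  have claim2 : ∑' k : K, ∑' l : L, ∑' m : M,
        μ (p ⁻¹' {k} ∩ (q ⁻¹' {l} ∩ t ⁻¹' {m})) *
          ENNReal.ofReal (Real.log (μ (q ⁻¹' {l} ∩ t ⁻¹' {m})).toReal -
            Real.log (μ (p ⁻¹' {k} ∩ (q ⁻¹' {l} ∩ t ⁻¹' {m}))).toReal)
      = Hc μ p (pjoin q t) := by
    rw [Hc, tsum_prod_e]
    refine tsum_congr fun k => ?_
    rw [tsum_prod_e]
    refine tsum_congr fun l => tsum_congr fun m => ?_
    show _ = μ (p ⁻¹' {k} ∩ pjoin q t ⁻¹' {(l, m)}) *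
        ENNReal.ofReal (Real.log (μ (pjoin q t ⁻¹' {(l, m)})).toReal -
          Real.log (μ (p ⁻¹' {k} ∩ pjoin q t ⁻¹' {(l, m)})).toReal)
    rw [pjoin_preimage]
  have claim3 : ∑' k : K, ∑' l : L, ∑' m : M,
        μ (p ⁻¹' {k} ∩ (q ⁻¹' {l} ∩ t ⁻¹' {m})) *
          ENNReal.ofReal (Real.log (μ (t ⁻¹' {m})).toReal -
            Real.log (μ (q ⁻¹' {l} ∩ t ⁻¹' {m})).toReal)
      = Hc μ q t := by
    rw [ENNReal.tsum_comm]
    rw [show Hc μ q t = ∑' l : L, ∑' m : M, μ (q ⁻¹' {l} ∩ t ⁻¹' {m}) *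
        ENNReal.ofReal (Real.log (μ (t ⁻¹' {m})).toReal -
          Real.log (μ (q ⁻¹' {l} ∩ t ⁻¹' {m})).toReal) from by rw [Hc, tsum_prod_e]]
    refine tsum_congr fun l => ?_
    rw [ENNReal.tsum_comm]
    refine tsum_congr fun m => ?_
    rw [ENNReal.tsum_mul_right,
      meas_inter_tsum' μ hp ((hq (measurableSet_singleton l)).inter
        (ht (measurableSet_singleton m)))]
  rw [claim1, ← claim2, ← claim3, ← ENNReal.tsum_add]
  refine tsum_congr fun k => ?_
  rw [← ENNReal.tsum_add]
  refine tsum_congr fun l => ?_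
  rw [← ENNReal.tsum_add]
  refine tsum_congr fun m => ?_
  exact term_split
    (measure_mono Set.inter_subset_right)
    (measure_mono Set.inter_subset_right)
    (measure_ne_top μ _)


lemma sAlg_le {q : X → L} (hq : Measurable q) : sAlg q ≤ mX := by
  rintro s ⟨t, -, rfl⟩
  exact hq (Set.to_countable t).measurableSet

/-- Computation of the conditional expectation of an indicator with respect to the
σ-algebra generated by a countable partition. -/
lemma condexp_sAlg (μ : Measure X) [IsProbabilityMeasure μ] {q : X → L} (hq : Measurable q)
    {A : Set X} (hA : MeasurableSet A) :
    μ[A.indicator (fun _ => (1:ℝ)) | sAlg q]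
      =ᵐ[μ] fun x => (μ (A ∩ q ⁻¹' {q x})).toReal / (μ (q ⁻¹' {q x})).toReal := by
  have hm : sAlg q ≤ mX := sAlg_le hq
  set g : X → ℝ := fun x => (μ (A ∩ q ⁻¹' {q x})).toReal / (μ (q ⁻¹' {q x})).toReal with hg
  have hqm : @Measurable X L (sAlg q) ⊤ q := Measurable.of_comap_le le_rfl
  have hgm' : Measurable[sAlg q] g :=
    (measurable_from_top
      (f := fun l : L => (μ (A ∩ q ⁻¹' {l})).toReal / (μ (q ⁻¹' {l})).toReal)).comp hqm
  have hgb : ∀ x, ‖g x‖ ≤ 1 := by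
    intro x
    rw [Real.norm_eq_abs, abs_of_nonneg (div_nonneg ENNReal.toReal_nonneg
      ENNReal.toReal_nonneg)]
    rcases eq_or_ne (μ (q ⁻¹' {q x})) 0 with h0 | h0
    · have : μ (A ∩ q ⁻¹' {q x}) = 0 :=
        le_antisymm (h0 ▸ measure_mono Set.inter_subset_right) zero_le
      simp [g, this]
    · apply div_le_one_of_le₀
      · exact ENNReal.toReal_mono (measure_ne_top μ _)
          (measure_mono Set.inter_subset_right)
      · exact ENNReal.toReal_nonneg
  have hgint : Integrable g μ :=
    (integrable_const (1:ℝ)).mono'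
      ((hgm'.mono hm le_rfl).aestronglyMeasurable) (Filter.Eventually.of_forall hgb)
  have hf : Integrable (A.indicator (fun _ => (1:ℝ))) μ :=
    (integrable_const (1:ℝ)).indicator hA
  refine (ae_eq_condExp_of_forall_setIntegral_eq hm hf
    (fun s _ _ => hgint.integrableOn) ?_
    ⟨g, hgm'.stronglyMeasurable, Filter.EventuallyEq.rfl⟩).symm
  rintro s ⟨S, -, rfl⟩ -
  have hmeas : ∀ l : S, MeasurableSet (q ⁻¹' {(l : L)}) :=
    fun l => hq (measurableSet_singleton _)
  have hd : Pairwise (Function.onFun Disjoint fun l : S => q ⁻¹' {(l : L)}) :=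
    fun l l' hll' => Set.disjoint_left.mpr fun x hx hx' =>
      hll' (Subtype.ext ((hx : q x = (l : L)).symm.trans (hx' : q x = (l' : L))))
  have hU : q ⁻¹' S = ⋃ l : S, q ⁻¹' {(l : L)} := by
    ext x
    simp only [Set.mem_preimage, Set.mem_iUnion, Set.mem_singleton_iff]
    exact ⟨fun h => ⟨⟨q x, h⟩, rfl⟩, fun ⟨l, hl⟩ => hl ▸ l.2⟩
  rw [hU, integral_iUnion hmeas hd (hgint.integrableOn),
    integral_iUnion hmeas hd (hf.integrableOn)]
  refine tsum_congr fun l => ?_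
  have h1 : ∫ x in q ⁻¹' {(l : L)}, A.indicator (fun _ => (1:ℝ)) x ∂μ
      = (μ (A ∩ q ⁻¹' {(l : L)})).toReal := by
    rw [setIntegral_indicator hA, setIntegral_const, smul_eq_mul, mul_one, Set.inter_comm]; rfl
  have h2 : ∫ x in q ⁻¹' {(l : L)}, g x ∂μ
      = (μ (q ⁻¹' {(l : L)})).toReal *
          ((μ (A ∩ q ⁻¹' {(l : L)})).toReal / (μ (q ⁻¹' {(l : L)})).toReal) := by
    calc ∫ x in q ⁻¹' {(l : L)}, g x ∂μ
        = ∫ _ in q ⁻¹' {(l : L)},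
            ((μ (A ∩ q ⁻¹' {(l : L)})).toReal / (μ (q ⁻¹' {(l : L)})).toReal) ∂μ :=
          setIntegral_congr_fun (hmeas l) (fun x (hx : q x = (l : L)) => by
            simp only [hg]; rw [hx])
      _ = _ := by rw [setIntegral_const, smul_eq_mul]; rfl
  rw [h1, h2]
  rcases eq_or_ne (μ (q ⁻¹' {(l : L)})) 0 with h0 | h0
  · have hA0 : μ (A ∩ q ⁻¹' {(l : L)}) = 0 :=
      le_antisymm (h0 ▸ measure_mono Set.inter_subset_right) zero_le
    simp [hA0]
  · rw [mul_div_cancel₀ _ (ENNReal.toReal_ne_zero.mpr ⟨h0, measure_ne_top μ _⟩)]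

/-- The conditional entropy given `sAlg q` equals the explicit pair formula. -/
lemma HpartC_eq_Hc (μ : Measure X) [IsProbabilityMeasure μ] {p : X → K} {q : X → L}
    (hp : Measurable p) (hq : Measurable q) :
    HpartC (mX := mX) μ p (sAlg q) = Hc μ p q := by
  have hae : ∀ᵐ x ∂μ, ∀ k : K,
      (μ[(p ⁻¹' {k}).indicator (fun _ => (1:ℝ)) | sAlg q]) x
        = (μ (p ⁻¹' {k} ∩ q ⁻¹' {q x})).toReal / (μ (q ⁻¹' {q x})).toReal :=
    ae_all_iff.mpr fun k => condexp_sAlg μ hq (hp (measurableSet_singleton k))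
  have h1 : HpartC (mX := mX) μ p (sAlg q)
      = ∫⁻ x, ENNReal.ofReal (-Real.log
          ((μ (p ⁻¹' {p x} ∩ q ⁻¹' {q x})).toReal / (μ (q ⁻¹' {q x})).toReal)) ∂μ := by
    rw [HpartC]
    refine lintegral_congr_ae ?_
    filter_upwards [hae] with x hx
    rw [show atomOf p x = p ⁻¹' {p x} from rfl, hx (p x)]
  rw [h1]
  have hmeas : ∀ kl : K × L, MeasurableSet (p ⁻¹' {kl.1} ∩ q ⁻¹' {kl.2}) :=
    fun kl => (hp (measurableSet_singleton _)).inter (hq (measurableSet_singleton _))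
  have hd : Pairwise (Function.onFun Disjoint
      fun kl : K × L => p ⁻¹' {kl.1} ∩ q ⁻¹' {kl.2}) :=
    fun kl kl' h => Set.disjoint_left.mpr fun x hx hx' =>
      h (Prod.ext ((hx.1 : p x = kl.1).symm.trans (hx'.1 : p x = kl'.1))
        ((hx.2 : q x = kl.2).symm.trans (hx'.2 : q x = kl'.2)))
  have hU : (Set.univ : Set X) = ⋃ kl : K × L, p ⁻¹' {kl.1} ∩ q ⁻¹' {kl.2} := by
    ext x
    simp only [Set.mem_univ, true_iff, Set.mem_iUnion, Set.mem_inter_iff,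
      Set.mem_preimage, Set.mem_singleton_iff]
    exact ⟨(p x, q x), rfl, rfl⟩
  rw [← setLIntegral_univ, hU, lintegral_iUnion hmeas hd, Hc]
  refine tsum_congr fun kl => ?_
  rw [setLIntegral_congr_fun (hmeas kl)
    (fun x hx => by rw [(hx.1 : p x = kl.1), (hx.2 : q x = kl.2)]), setLIntegral_const]
  rcases eq_or_ne (μ (p ⁻¹' {kl.1} ∩ q ⁻¹' {kl.2})) 0 with h0 | h0
  · rw [h0]; simp
  · have hb0 : μ (q ⁻¹' {kl.2}) ≠ 0 := fun hb =>
      h0 (le_antisymm (hb ▸ measure_mono Set.inter_subset_right) zero_le)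
    have hcR : (μ (p ⁻¹' {kl.1} ∩ q ⁻¹' {kl.2})).toReal ≠ 0 :=
      (ENNReal.toReal_ne_zero.mpr ⟨h0, measure_ne_top μ _⟩)
    have hbR : (μ (q ⁻¹' {kl.2})).toReal ≠ 0 :=
      (ENNReal.toReal_ne_zero.mpr ⟨hb0, measure_ne_top μ _⟩)
    rw [Real.log_div hcR hbR, neg_sub, mul_comm]

end Aux

section Assembly

lemma FF_sub_le {r : ℕ} (hr : 1 ≤ r) {X : Type*} [mX : MeasurableSpace X]
    (μ : Measure X) [IsProbabilityMeasure μ]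
    (T : FG r → X → X) (hTmp : ∀ g : FG r, MeasurePreserving (T g) μ μ)
    (α β : X → ℕ) (hαm : Measurable α) (hβm : Measurable β)
    (hHα : Hpart μ α < ⊤) (hHβ : Hpart μ β < ⊤) :
    FF T μ α - FF T μ β
      ≤ (2 * (r : ℝ) - 1) * (Hc μ β α).toReal + 2 * (r : ℝ) * (Hc μ α β).toReal := by
  have hr' : (1 : ℝ) ≤ (r : ℝ) := by exact_mod_cast hr
  have h2r : (0 : ℝ) ≤ 2 * (r : ℝ) - 1 := by linarith
  have hHcαβ : Hc μ α β ≠ ⊤ := ((Hc_le_Hpart μ hαm hβm).trans_lt hHα).ne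
  have hHcβα : Hc μ β α ≠ ⊤ := ((Hc_le_Hpart μ hβm hαm).trans_lt hHβ).ne
  -- step (i): H(β) − H(α) ≤ H(β|α)
  have hi : (Hpart μ β).toReal - (Hpart μ α).toReal ≤ (Hc μ β α).toReal := by
    have hchain : Hpart μ (pjoin β α) = Hpart μ α + Hc μ β α := Hpart_pjoin μ hβm hαm
    have hβle : Hpart μ β ≤ Hpart μ (pjoin β α) :=
      Hpart_comp_le μ (hβm.prodMk hαm) Prod.fst
    have hfin : Hpart μ α + Hc μ β α ≠ ⊤ := ENNReal.add_ne_top.mpr ⟨hHα.ne, hHcβα⟩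
    have h := ENNReal.toReal_mono hfin (hβle.trans hchain.le)
    rw [ENNReal.toReal_add hHα.ne hHcβα] at h
    linarith
  -- step (ii): per-generator join comparison
  have hii : ∀ i : Fin r,
      (Hpart μ (pjoin α (pull T (FreeGroup.of i) α))).toReal
        ≤ (Hpart μ (pjoin β (pull T (FreeGroup.of i) β))).toReal
          + 2 * (Hc μ α β).toReal := by
    intro i
    set s := FreeGroup.of i with hs
    have hαs : Measurable (pull T s α) := hαm.comp (hTmp s).measurable
    have hβs : Measurable (pull T s β) := hβm.comp (hTmp s).measurable
    have hQm : Measurable (pjoin β (pull T s β)) := hβm.prodMk hβs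
    have hAm : Measurable (pjoin α (pull T s α)) := hαm.prodMk hαs
    have key : Hpart μ (pjoin α (pull T s α))
        ≤ Hpart μ (pjoin β (pull T s β)) + (Hc μ α β + Hc μ α β) := by
      have h1 : Hpart μ (pjoin α (pull T s α))
          ≤ Hpart μ (pjoin (pjoin α (pull T s α)) (pjoin β (pull T s β))) :=
        Hpart_comp_le μ (hAm.prodMk hQm) Prod.fst
      have h2 : Hpart μ (pjoin (pjoin α (pull T s α)) (pjoin β (pull T s β)))
          = Hpart μ (pjoin β (pull T s β))
            + Hc μ (pjoin α (pull T s α)) (pjoin β (pull T s β)) :=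
        Hpart_pjoin μ hAm hQm
      have h3 : Hc μ (pjoin α (pull T s α)) (pjoin β (pull T s β))
          = Hc μ (pull T s α) (pjoin β (pull T s β))
            + Hc μ α (pjoin (pull T s α) (pjoin β (pull T s β))) :=
        Hc_pjoin_eq μ hαm hαs hQm
      have h4 : Hc μ (pull T s α) (pjoin β (pull T s β)) ≤ Hc μ α β := by
        have hle : Hc μ (pull T s α) (pjoin β (pull T s β))
            ≤ Hc μ (pull T s α) (Prod.snd ∘ pjoin β (pull T s β)) :=
          Hc_comp_le μ hαs hQm Prod.snd
        have heq : Hc μ (pull T s α) (pull T s β) = Hc μ α β :=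
          Hc_comp_mp μ (hTmp s) hαm hβm
        exact hle.trans_eq heq
      have h5 : Hc μ α (pjoin (pull T s α) (pjoin β (pull T s β))) ≤ Hc μ α β := by
        have hle : Hc μ α (pjoin (pull T s α) (pjoin β (pull T s β)))
            ≤ Hc μ α ((fun y : ℕ × (ℕ × ℕ) => y.2.1)
                ∘ pjoin (pull T s α) (pjoin β (pull T s β))) :=
          Hc_comp_le μ hαm (hαs.prodMk hQm) (fun y : ℕ × (ℕ × ℕ) => y.2.1)
        exact hle
      calc Hpart μ (pjoin α (pull T s α))
          ≤ Hpart μ (pjoin β (pull T s β))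
            + (Hc μ (pull T s α) (pjoin β (pull T s β))
              + Hc μ α (pjoin (pull T s α) (pjoin β (pull T s β)))) := by
            rw [← h3, ← h2]; exact h1
        _ ≤ Hpart μ (pjoin β (pull T s β)) + (Hc μ α β + Hc μ α β) :=
            add_le_add le_rfl (add_le_add h4 h5)
    have hcc : Hc μ α β + Hc μ α β ≠ ⊤ := ENNReal.add_ne_top.mpr ⟨hHcαβ, hHcαβ⟩
    have hHQ : Hpart μ (pjoin β (pull T s β)) ≠ ⊤ := by
      rw [Hpart_pjoin μ hβm hβs]
      refine ENNReal.add_ne_top.mpr ⟨?_, ((Hc_le_Hpart μ hβm hβs).trans_lt hHβ).ne⟩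
      have heq : Hpart μ (pull T s β) = Hpart μ β := Hpart_comp_mp μ (hTmp s) hβm
      rw [heq]; exact hHβ.ne
    have hfin2 : Hpart μ (pjoin β (pull T s β)) + (Hc μ α β + Hc μ α β) ≠ ⊤ :=
      ENNReal.add_ne_top.mpr ⟨hHQ, hcc⟩
    have h := ENNReal.toReal_mono hfin2 key
    rw [ENNReal.toReal_add hHQ hcc, ENNReal.toReal_add hHcαβ hHcαβ] at h
    linarith
  -- assemble
  have hsum : ∑ i : Fin r, (Hpart μ (pjoin α (pull T (FreeGroup.of i) α))).toReal
      ≤ ∑ i : Fin r, ((Hpart μ (pjoin β (pull T (FreeGroup.of i) β))).toReal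
        + 2 * (Hc μ α β).toReal) := Finset.sum_le_sum fun i _ => hii i
  rw [Finset.sum_add_distrib, Finset.sum_const, Finset.card_univ, Fintype.card_fin,
    nsmul_eq_mul] at hsum
  have e1 : (1 - 2 * (r : ℝ)) * (Hpart μ α).toReal
      - (1 - 2 * (r : ℝ)) * (Hpart μ β).toReal
      ≤ (2 * (r : ℝ) - 1) * (Hc μ β α).toReal := by
    calc (1 - 2 * (r : ℝ)) * (Hpart μ α).toReal
          - (1 - 2 * (r : ℝ)) * (Hpart μ β).toReal
        = (2 * (r : ℝ) - 1) * ((Hpart μ β).toReal - (Hpart μ α).toReal) := by ring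
      _ ≤ (2 * (r : ℝ) - 1) * (Hc μ β α).toReal := mul_le_mul_of_nonneg_left hi h2r
  simp only [FF]
  linarith

end Assembly
/-- `|F(T,α) − F(T,β)| ≤ (4r−1)·d(α,β)` where `d` is the Rohlin
distance. -/
theorem stmt_19 {r : ℕ} (hr : 1 ≤ r) {X : Type*} [MeasurableSpace X] [StandardBorelSpace X]
    (μ : Measure X) [IsProbabilityMeasure μ]
    (T : FG r → X → X) (hT1 : T 1 = id)
    (hTmul : ∀ g h : FG r, T (g * h) = T g ∘ T h)
    (hTmp : ∀ g : FG r, MeasurePreserving (T g) μ μ)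
    (α β : X → ℕ) (hαm : Measurable α) (hβm : Measurable β)
    (hHα : Hpart μ α < ⊤) (hHβ : Hpart μ β < ⊤) :
    |FF T μ α - FF T μ β| ≤ (4 * (r : ℝ) - 1) * rohlinDist μ α β := by
  have hr' : (1 : ℝ) ≤ (r : ℝ) := by exact_mod_cast hr
  have h1 := FF_sub_le hr μ T hTmp α β hαm hβm hHα hHβ
  have h2 := FF_sub_le hr μ T hTmp β α hβm hαm hHβ hHα
  have hdd : rohlinDist μ α β = (Hc μ α β).toReal + (Hc μ β α).toReal := by
    rw [rohlinDist, HpartC_eq_Hc μ hαm hβm, HpartC_eq_Hc μ hβm hαm]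
  have hx : (0 : ℝ) ≤ (Hc μ α β).toReal := ENNReal.toReal_nonneg
  have hy : (0 : ℝ) ≤ (Hc μ β α).toReal := ENNReal.toReal_nonneg
  rw [abs_sub_le_iff]
  constructor
  · refine h1.trans ?_
    rw [hdd]
    nlinarith
  · refine h2.trans ?_
    rw [hdd]
    nlinarith

end

end Bowen
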